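/- Let (E,A) be a dissipative operator pencil with A densely defined and closed. If some λ₀ > 0 belongs to the resolvent set ϱ(E,A) (i.e., (λ₀E−A)⁻¹ exists as a bounded operator from Z to X), then every λ > 0 belongs to ϱ(E,A). -/

import Mathlib

open scoped InnerProductSpace

/-- `s ∈ ϱ(E,A)`: the pencil `sE − A` has a bounded everywhere-defined inverse `R ∈ L(Z,X)`. -/
def InResolvent {X Z : Type*} [NormedAddCommGroup X] [NormedSpace ℂ X]
    [NormedAddCommGroup Z] [NormedSpace ℂ Z]
    (E : X →L[ℂ] Z) (A : X →ₗ.[ℂ] Z) (s : ℂ) : Prop :=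
  ∃ R : Z →L[ℂ] X, (∀ z : Z, R z ∈ A.domain) ∧
    (∀ (z : Z) (h : R z ∈ A.domain), s • E (R z) - A ⟨R z, h⟩ = z) ∧
    (∀ x : A.domain, R (s • E (x : X) - A x) = x)

/-- Neumann-series step: from `λ₀ ∈ ϱ(E,A)` to any `λ ∈ (0, 2λ₀)`. -/
lemma stmt2_step {X Z : Type*}
    [NormedAddCommGroup X] [InnerProductSpace ℂ X] [CompleteSpace X]
    [NormedAddCommGroup Z] [InnerProductSpace ℂ Z] [CompleteSpace Z]
    (E : X →L[ℂ] Z) (A : X →ₗ.[ℂ] Z)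
    (hdiss : ∀ x : A.domain, (⟪A x, E (x : X)⟫_ℂ).re ≤ 0)
    (l₀ : ℝ) (hl₀ : 0 < l₀) (hres : InResolvent E A (l₀ : ℂ))
    (l : ℝ) (hl : 0 < l) (hlt : l < 2 * l₀) : InResolvent E A (l : ℂ) := by
  obtain ⟨R₀, hdom, hfwd, hbwd⟩ := hres
  set T : Z →L[ℂ] Z := E.comp R₀ with hTdef
  -- dissipativity gives `l₀ * ‖T z‖ ≤ ‖z‖`
  have hTz : ∀ z : Z, l₀ * ‖T z‖ ≤ ‖z‖ := by
    intro z
    set x : A.domain := ⟨R₀ z, hdom z⟩ with hx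
    have hz : (l₀ : ℂ) • E (R₀ z) - A x = z := hfwd z (hdom z)
    have hTzx : T z = E (x : X) := rfl
    have hkey : l₀ * ‖E (x : X)‖ ^ 2 ≤ (⟪z, E (x : X)⟫_ℂ).re := by
      rw [← hz]
      have hinner : ⟪(l₀ : ℂ) • E (R₀ z) - A x, E (x : X)⟫_ℂ
          = (l₀ : ℂ) * ((‖E (x : X)‖ : ℂ) ^ 2) - ⟪A x, E (x : X)⟫_ℂ := by
        rw [inner_sub_left, inner_smul_left]
        have hEx : E (R₀ z) = E (x : X) := rfl
        rw [hEx, inner_self_eq_norm_sq_to_K]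
        simp [Complex.conj_ofReal]
      rw [hinner]
      have hd := hdiss x
      simp only [Complex.sub_re, Complex.mul_re, Complex.ofReal_re, Complex.ofReal_im]
      have : ((‖E (x : X)‖ : ℂ) ^ 2) = ((‖E (x : X)‖ ^ 2 : ℝ) : ℂ) := by push_cast; ring
      rw [this]
      simp only [Complex.ofReal_re, Complex.ofReal_im]
      nlinarith [hd]
    have hcs : (⟪z, E (x : X)⟫_ℂ).re ≤ ‖z‖ * ‖E (x : X)‖ := by
      refine le_trans (Complex.re_le_norm _) ?_
      have := norm_inner_le_norm (𝕜 := ℂ) z (E (x : X))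
      simpa using this
    rw [hTzx]
    rcases eq_or_lt_of_le (norm_nonneg (E (x : X))) with h0 | h0
    · rw [← h0]; simpa using norm_nonneg z
    · nlinarith [hkey, hcs]
  have hTnorm : ‖T‖ ≤ l₀⁻¹ := by
    refine ContinuousLinearMap.opNorm_le_bound _ (by positivity) fun z => ?_
    rw [inv_mul_eq_div, le_div_iff₀ hl₀]
    linarith [hTz z]
  set c : ℂ := (l : ℂ) - (l₀ : ℂ) with hcdef
  have hc : (l : ℂ) = (l₀ : ℂ) + c := by rw [hcdef]; ring
  have hcnorm : ‖c‖ < l₀ := by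
    rw [hcdef]
    have : ((l : ℂ) - (l₀ : ℂ)) = ((l - l₀ : ℝ) : ℂ) := by push_cast; ring
    rw [this, Complex.norm_real, Real.norm_eq_abs, abs_lt]
    constructor <;> linarith
  have hsmall : ‖-(c • T)‖ < 1 := by
    rw [norm_neg, norm_smul]
    calc ‖c‖ * ‖T‖ ≤ ‖c‖ * l₀⁻¹ := by
          exact mul_le_mul_of_nonneg_left hTnorm (norm_nonneg c)
      _ < l₀ * l₀⁻¹ := by
          exact mul_lt_mul_of_pos_right hcnorm (by positivity)
      _ = 1 := mul_inv_cancel₀ (ne_of_gt hl₀)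
  set u : (Z →L[ℂ] Z)ˣ := Units.oneSub (-(c • T)) hsmall with hudef
  have huval : (u : Z →L[ℂ] Z) = 1 + c • T := by
    rw [hudef]
    show 1 - (-(c • T)) = 1 + c • T
    rw [sub_neg_eq_add]
  have hu1 : ∀ z : Z, (u : Z →L[ℂ] Z) ((↑u⁻¹ : Z →L[ℂ] Z) z) = z := by
    intro z
    rw [← ContinuousLinearMap.mul_apply, u.mul_inv, ContinuousLinearMap.one_apply]
  have hu2 : ∀ z : Z, (↑u⁻¹ : Z →L[ℂ] Z) ((u : Z →L[ℂ] Z) z) = z := by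
    intro z
    rw [← ContinuousLinearMap.mul_apply, u.inv_mul, ContinuousLinearMap.one_apply]
  refine ⟨R₀.comp (↑u⁻¹ : Z →L[ℂ] Z), fun z => hdom _, ?_, ?_⟩
  · intro z h
    set w : Z := (↑u⁻¹ : Z →L[ℂ] Z) z with hwdef
    have h0 : (l₀ : ℂ) • E (R₀ w) - A ⟨R₀ w, h⟩ = w := hfwd w h
    have hTw : T w = E (R₀ w) := rfl
    calc (l : ℂ) • E (R₀ w) - A ⟨R₀ w, h⟩
        = ((l₀ : ℂ) • E (R₀ w) - A ⟨R₀ w, h⟩) + c • E (R₀ w) := by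
          rw [hc, add_smul]; abel
      _ = w + c • T w := by rw [h0, hTw]
      _ = (u : Z →L[ℂ] Z) w := by
          rw [huval]
          simp [ContinuousLinearMap.add_apply, ContinuousLinearMap.smul_apply,
            ContinuousLinearMap.one_apply]
      _ = z := hu1 z
  · intro x
    set y : Z := (l₀ : ℂ) • E (x : X) - A x with hydef
    have hxy : R₀ y = (x : X) := hbwd x
    have hTy : T y = E (x : X) := by
      show E (R₀ y) = E (x : X)
      rw [hxy]
    have huy : (u : Z →L[ℂ] Z) y = (l : ℂ) • E (x : X) - A x := by
      rw [huval]
      simp only [ContinuousLinearMap.add_apply, ContinuousLinearMap.smul_apply,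
        ContinuousLinearMap.one_apply, hTy]
      rw [hydef, hc, add_smul]; abel
    show R₀ ((↑u⁻¹ : Z →L[ℂ] Z) ((l : ℂ) • E (x : X) - A x)) = (x : X)
    rw [← huy, hu2, hxy]

/-- If the pencil `(E,A)` is dissipative and some `λ₀ > 0` belongs to `ϱ(E,A)`,
then every `λ > 0` belongs to `ϱ(E,A)`. -/
theorem stmt2 {X Z : Type*}
    [NormedAddCommGroup X] [InnerProductSpace ℂ X] [CompleteSpace X]
    [NormedAddCommGroup Z] [InnerProductSpace ℂ Z] [CompleteSpace Z]
    (E : X →L[ℂ] Z) (A : X →ₗ.[ℂ] Z)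
    (hdense : Dense (A.domain : Set X))
    (hclosed : IsClosed (A.graph : Set (X × Z)))
    (hdiss : ∀ x : A.domain, (⟪A x, E (x : X)⟫_ℂ).re ≤ 0)
    (l₀ : ℝ) (hl₀ : 0 < l₀) (hres : InResolvent E A (l₀ : ℂ)) :
    ∀ l : ℝ, 0 < l → InResolvent E A (l : ℂ) := by
  have key : ∀ n : ℕ, ∀ m : ℝ, 0 < m → m ≤ (3/2 : ℝ) ^ n * l₀ → InResolvent E A (m : ℂ) := by
    intro n
    induction n with
    | zero =>
      intro m hm hle
      simp only [pow_zero, one_mul] at hle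
      exact stmt2_step E A hdiss l₀ hl₀ hres m hm (by linarith)
    | succ n ih =>
      intro m hm hle
      have hμpos : 0 < (3/2 : ℝ) ^ n * l₀ := by positivity
      have hμ := ih ((3/2 : ℝ) ^ n * l₀) hμpos le_rfl
      refine stmt2_step E A hdiss _ hμpos hμ m hm ?_
      rw [pow_succ] at hle
      nlinarith
  intro l hl
  obtain ⟨n, hn⟩ := pow_unbounded_of_one_lt (l / l₀) (by norm_num : (1 : ℝ) < 3/2)
  exact key n l hl (le_of_lt ((div_lt_iff₀ hl₀).mp hn))
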